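/- Let a₀ ≥ 0, b > 0, c ≥ 0 with a₀·b > c, and for x ≥ 0 define g(x) = ((a₀ + x + b) + √((a₀ + x − b)² + 4c)) / ((a₀ + x + b) − √((a₀ + x − b)² + 4c)). Then g attains its minimum on [0, ∞) at x* = max(b − a₀ + 2c/b, 0); i.e. g(x*) ≤ g(x) for all x ≥ 0. Interpretation: given a frame {φ_i}_{i=1}^{m−1} in ℝ² with a₀ = Σ φ_{i,1}², b = Σ φ_{i,2}², c = (Σ φ_{i,1}φ_{i,2})², the condition number of the frame obtained by adjoining φ_m = (√x, 0) is g(x), and it is minimized at x = x*. -/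

import Mathlib

private lemma sq_le_imp (x y : ℝ) (hx : 0 ≤ x) (hy : 0 ≤ y) (h : x ^ 2 ≤ y ^ 2) : x ≤ y := by
  nlinarith

private lemma sqrt_lt_of (S v : ℝ) (hS : 0 < S) (hv : 0 ≤ v) (h : v < S ^ 2) :
    Real.sqrt v < S := by
  have h1 := Real.sqrt_lt_sqrt hv h
  rwa [Real.sqrt_sq hS.le] at h1

private lemma aux_mono (S₁ S₂ U₁ U₂ : ℝ)
    (h₁ : U₁ < S₁) (h₂ : U₂ < S₂) (hkey : U₁ * S₂ ≤ U₂ * S₁) :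
    (S₁ + U₁) / (S₁ - U₁) ≤ (S₂ + U₂) / (S₂ - U₂) := by
  rw [div_le_div_iff₀ (by linarith) (by linarith)]
  nlinarith

private lemma hpoly_lemma (a b c : ℝ) (hc : 0 ≤ c) :
    (4 * c ^ 2 + 4 * c * b ^ 2) * (a + b) ^ 2
      ≤ ((a - b) ^ 2 + 4 * c) * (2 * b ^ 2 + 2 * c) ^ 2 := by
  have id : ((a - b) ^ 2 + 4 * c) * (2 * b ^ 2 + 2 * c) ^ 2
      - (4 * c ^ 2 + 4 * c * b ^ 2) * (a + b) ^ 2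
      = 4 * (c + b ^ 2) * ((a - b) * b - 2 * c) ^ 2 := by ring
  nlinarith [mul_nonneg (by positivity : (0:ℝ) ≤ c + b ^ 2)
    (sq_nonneg ((a - b) * b - 2 * c))]

private lemma case2_lemma (a₀ b c x : ℝ) (ha₀ : 0 ≤ a₀) (hb : 0 < b) (hc : 0 ≤ c)
    (hx : 0 ≤ x) (hbig : b ^ 2 + 2 * c ≤ a₀ * b) :
    ((a₀ - b) ^ 2 + 4 * c) * (a₀ + x + b) ^ 2
      ≤ ((a₀ + x - b) ^ 2 + 4 * c) * (a₀ + b) ^ 2 := by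
  have key : 0 ≤ b * a₀ * (a₀ + x) - b ^ 3 - c * (a₀ + (a₀ + x)) - 2 * b * c := by
    nlinarith [mul_nonneg hx (sub_nonneg.2 hbig), mul_nonneg hc hx,
      mul_nonneg (mul_pos hb hb).le hx]
  nlinarith [mul_nonneg hx key]

/-- For a₀ ≥ 0, b > 0, c ≥ 0 with a₀b > c, the condition number
g(x) = ((a₀+x+b) + √((a₀+x−b)² + 4c)) / ((a₀+x+b) − √((a₀+x−b)² + 4c))
of the frame obtained by adjoining (√x, 0) is minimized over x ≥ 0 at
x* = max(b − a₀ + 2c/b, 0). -/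
theorem stmt_14 (a₀ b c : ℝ) (ha₀ : 0 ≤ a₀) (hb : 0 < b) (hc : 0 ≤ c) (h : c < a₀ * b) :
    ∀ x : ℝ, 0 ≤ x →
      ((a₀ + max (b - a₀ + 2 * c / b) 0 + b) +
          Real.sqrt ((a₀ + max (b - a₀ + 2 * c / b) 0 - b) ^ 2 + 4 * c)) /
        ((a₀ + max (b - a₀ + 2 * c / b) 0 + b) -
          Real.sqrt ((a₀ + max (b - a₀ + 2 * c / b) 0 - b) ^ 2 + 4 * c))
      ≤ ((a₀ + x + b) + Real.sqrt ((a₀ + x - b) ^ 2 + 4 * c)) /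
          ((a₀ + x + b) - Real.sqrt ((a₀ + x - b) ^ 2 + 4 * c)) := by
  intro x hx
  have hb' : b ≠ 0 := ne_of_gt hb
  set a : ℝ := a₀ + x with ha
  have hab : c < a * b := by nlinarith
  have ha0 : 0 ≤ a := by linarith
  have hU₂nn : (0:ℝ) ≤ (a - b) ^ 2 + 4 * c := by positivity
  have e₂ : (Real.sqrt ((a - b) ^ 2 + 4 * c)) ^ 2 = (a - b) ^ 2 + 4 * c :=
    Real.sq_sqrt hU₂nn
  have hS₂ : (0:ℝ) < a + b := by linarith
  have h₂ : Real.sqrt ((a - b) ^ 2 + 4 * c) < a + b := by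
    apply sqrt_lt_of _ _ hS₂ hU₂nn
    nlinarith
  rcases le_or_gt 0 (b - a₀ + 2 * c / b) with hm | hm
  · -- max = b - a₀ + 2c/b, evaluation point A = b + 2c/b
    rw [max_eq_left hm]
    have hA : a₀ + (b - a₀ + 2 * c / b) = b + 2 * c / b := by ring
    rw [hA]
    set A : ℝ := b + 2 * c / b with hAdef
    have hA2 : (A - b) * b = 2 * c := by
      simp only [hAdef]; field_simp; ring
    have hA3 : (A + b) * b = 2 * b ^ 2 + 2 * c := by nlinarith
    have hU₁nn : (0:ℝ) ≤ (A - b) ^ 2 + 4 * c := by positivity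
    have hS₁ : (0:ℝ) < A + b := by nlinarith
    have e₁ : (Real.sqrt ((A - b) ^ 2 + 4 * c)) ^ 2 = (A - b) ^ 2 + 4 * c :=
      Real.sq_sqrt hU₁nn
    have h₁ : Real.sqrt ((A - b) ^ 2 + 4 * c) < A + b := by
      apply sqrt_lt_of _ _ hS₁ hU₁nn
      have hAb : c < A * b := by nlinarith
      nlinarith
    apply aux_mono _ _ _ _ h₁ h₂
    apply sq_le_imp _ _ (by positivity) (by positivity)
    rw [mul_pow, mul_pow, e₁, e₂]
    have hb2 : (0:ℝ) < b ^ 2 := by positivity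
    have eL : ((A - b) ^ 2 + 4 * c) * (a + b) ^ 2 * b ^ 2
        = (4 * c ^ 2 + 4 * c * b ^ 2) * (a + b) ^ 2 := by
      linear_combination ((a + b) ^ 2 * ((A - b) * b + 2 * c)) * hA2
    have eR : ((a - b) ^ 2 + 4 * c) * (A + b) ^ 2 * b ^ 2
        = ((a - b) ^ 2 + 4 * c) * (2 * b ^ 2 + 2 * c) ^ 2 := by
      linear_combination (((a - b) ^ 2 + 4 * c) * ((A + b) * b + 2 * b ^ 2 + 2 * c)) * hA3
    have hfin : ((A - b) ^ 2 + 4 * c) * (a + b) ^ 2 * b ^ 2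
        ≤ ((a - b) ^ 2 + 4 * c) * (A + b) ^ 2 * b ^ 2 := by
      rw [eL, eR]; exact hpoly_lemma a b c hc
    exact le_of_mul_le_mul_right hfin hb2
  · -- max = 0, evaluation point a₀, and a₀ ≥ b + 2c/b
    rw [max_eq_right hm.le]
    have ha₀big : b ^ 2 + 2 * c ≤ a₀ * b := by
      have h1 : (b - a₀ + 2 * c / b) * b < 0 := mul_neg_of_neg_of_pos hm hb
      have h2 : (b - a₀ + 2 * c / b) * b = b ^ 2 - a₀ * b + 2 * c := by
        field_simp
      nlinarith
    have h0 : a₀ + 0 = a₀ := by ring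
    rw [h0]
    have hU₁nn : (0:ℝ) ≤ (a₀ - b) ^ 2 + 4 * c := by positivity
    have hS₁ : (0:ℝ) < a₀ + b := by linarith
    have e₁ : (Real.sqrt ((a₀ - b) ^ 2 + 4 * c)) ^ 2 = (a₀ - b) ^ 2 + 4 * c :=
      Real.sq_sqrt hU₁nn
    have h₁ : Real.sqrt ((a₀ - b) ^ 2 + 4 * c) < a₀ + b := by
      apply sqrt_lt_of _ _ hS₁ hU₁nn
      nlinarith
    apply aux_mono _ _ _ _ h₁ h₂
    apply sq_le_imp _ _ (by positivity) (by positivity)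
    rw [mul_pow, mul_pow, e₁, e₂, ha]
    exact case2_lemma a₀ b c x ha₀ hb hc hx ha₀big
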